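/- The parity function on n Boolean variables cannot be computed by a polynomial threshold function of degree less than n. That is, if p is a real polynomial in n variables of degree d such that for every x in {0,1}^n, sign(p(x)) = 1 if x_1 + ... + x_n is even and sign(p(x)) = -1 if it is odd, then d >= n. -/
import Mathlib


open MvPolynomial

/-- The parity function on `n` Boolean variables cannot be computed by a polynomial
threshold function of degree less than `n`. -/
theorem stmt_0 (n : ℕ) (p : MvPolynomial (Fin n) ℝ)
    (hsign : ∀ x : Fin n → Bool,
      (Even (Finset.univ.filter (fun i => x i)).card →
        0 ≤ eval (fun i => if x i then (1 : ℝ) else 0) p) ∧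
      (¬ Even (Finset.univ.filter (fun i => x i)).card →
        eval (fun i => if x i then (1 : ℝ) else 0) p < 0)) :
    n ≤ p.totalDegree := by
  by_contra hlt
  push_neg at hlt
  have hn : 0 < n := by omega
  set F : (Fin n → Bool) → Fin n → ℝ := fun x i => if x i then 1 else 0 with hF
  set sgn : (Fin n → Bool) → ℝ :=
    fun x => (-1 : ℝ) ^ (Finset.univ.filter (fun i => x i)).card with hsgn
  -- the signed sum is positive
  have hpos : 0 < ∑ x : Fin n → Bool, sgn x * eval (F x) p := by
    apply Finset.sum_pos'
    · intro x _
      rcases Nat.even_or_odd (Finset.univ.filter (fun i => x i)).card with he | ho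
      · have h1 := (hsign x).1 he
        simp only [hsgn, he.neg_one_pow, one_mul]
        exact h1
      · have h2 := (hsign x).2 (Nat.not_even_iff_odd.mpr ho)
        simp only [hsgn, ho.neg_one_pow, neg_one_mul]
        linarith
    · refine ⟨fun i => decide (i = ⟨0, hn⟩), Finset.mem_univ _, ?_⟩
      have hcard : (Finset.univ.filter
          (fun i => (decide (i = (⟨0, hn⟩ : Fin n)) : Bool) = true)).card = 1 := by
        simp [Finset.filter_eq']
      have hodd : ¬ Even (Finset.univ.filter
          (fun i => ((fun i => decide (i = (⟨0, hn⟩ : Fin n))) i : Bool))).card := by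
        simp only [hcard]
        decide
      have h2 := (hsign _).2 hodd
      have : sgn (fun i => decide (i = (⟨0, hn⟩ : Fin n))) = -1 := by
        simp [hsgn, Finset.filter_eq']
      rw [this]
      linarith
  -- the signed sum is zero
  have hzero : ∑ x : Fin n → Bool, sgn x * eval (F x) p = 0 := by
    have hsgn_prod : ∀ x : Fin n → Bool,
        sgn x = ∏ i : Fin n, (if x i then (-1 : ℝ) else 1) := by
      intro x
      rw [Finset.prod_ite, Finset.prod_const, Finset.prod_const]
      simp [hsgn]
    calc ∑ x : Fin n → Bool, sgn x * eval (F x) p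
        = ∑ x : Fin n → Bool, ∑ d ∈ p.support,
            coeff d p * ∏ i : Fin n,
              ((if x i then (-1:ℝ) else 1) * (if x i then (1:ℝ) else 0) ^ d i) := by
          refine Finset.sum_congr rfl fun x _ => ?_
          rw [eval_eq', hsgn_prod x, Finset.mul_sum]
          refine Finset.sum_congr rfl fun d _ => ?_
          rw [Finset.prod_mul_distrib]
          ring
      _ = ∑ d ∈ p.support, coeff d p * ∑ x : Fin n → Bool,
            ∏ i : Fin n,
              ((if x i then (-1:ℝ) else 1) * (if x i then (1:ℝ) else 0) ^ d i) := by
          rw [Finset.sum_comm]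
          simp [Finset.mul_sum]
      _ = 0 := by
          apply Finset.sum_eq_zero
          intro d hd
          have hxsum : ∑ x : Fin n → Bool,
              ∏ i : Fin n,
                ((if x i then (-1:ℝ) else 1) * (if x i then (1:ℝ) else 0) ^ d i)
              = ∏ i : Fin n, ∑ b : Bool,
                ((if b then (-1:ℝ) else 1) * (if b then (1:ℝ) else 0) ^ d i) := by
            rw [Finset.prod_univ_sum]
            rw [Fintype.piFinset_univ]
          rw [hxsum]
          -- some d i = 0
          have hdeg : ∑ i : Fin n, d i ≤ p.totalDegree := by
            have := MvPolynomial.le_totalDegree hd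
            rwa [Finsupp.sum_fintype _ _ (fun _ => rfl)] at this
          have : ∃ i : Fin n, d i = 0 := by
            by_contra hall
            push_neg at hall
            have : n ≤ ∑ i : Fin n, d i := by
              calc n = ∑ _i : Fin n, 1 := by simp
                _ ≤ ∑ i : Fin n, d i :=
                    Finset.sum_le_sum fun i _ => Nat.one_le_iff_ne_zero.mpr (hall i)
            omega
          obtain ⟨i, hi⟩ := this
          rw [Finset.prod_eq_zero (Finset.mem_univ i)]
          · ring
          · simp [hi, Fintype.sum_bool]
  linarith
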